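/- Let k ≥ s ≥ 0 and p ≥ 0. For each m with −1 ≤ m ≤ k − s, the number of lattice paths with k upsteps and s downsteps that visit height m from above exactly p times is the same; i.e., this count is independent of m in that range. -/

import Mathlib

/-- The height of a lattice path after `r` steps, where the path is encoded as
`p : Fin n → Bool` (`true` = upstep `+1`, `false` = downstep `-1`) and starts at height `0`. -/
def height {n : ℕ} (p : Fin n → Bool) (r : ℕ) : ℤ :=
  ∑ i ∈ Finset.univ.filter (fun i : Fin n => (i : ℕ) < r), (if p i then (1 : ℤ) else -1)

/-- The number of upsteps of a lattice path. -/
def upSteps {n : ℕ} (p : Fin n → Bool) : ℕ :=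
  (Finset.univ.filter (fun i => p i = true)).card

/-- The number of times the path `p` visits height `m` from above, i.e. the number of
times `r` such that the height after `r` steps is `m` and the `r`-th step is a downstep
(equivalently, the height after `r - 1` steps is `m + 1`). -/
def visitsFromAbove {n : ℕ} (p : Fin n → Bool) (m : ℤ) : ℕ :=
  ((Finset.Icc 1 n).filter (fun r => height p r = m ∧ height p (r - 1) = m + 1)).card

namespace Stmt3
open Finset

variable {n : ℕ}

def stepZ (q : Fin n → Bool) (r : ℕ) : ℤ :=
  if h : r < n then (if q ⟨r, h⟩ then 1 else -1) else 0

lemma height_zero (q : Fin n → Bool) : height q 0 = 0 := by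
  simp [height]

lemma height_succ (q : Fin n → Bool) (r : ℕ) :
    height q (r + 1) = height q r + stepZ q r := by
  unfold height stepZ
  by_cases h : r < n
  · rw [dif_pos h]
    have hins : Finset.univ.filter (fun i : Fin n => (i : ℕ) < r + 1)
        = insert (⟨r, h⟩ : Fin n) (Finset.univ.filter (fun i : Fin n => (i : ℕ) < r)) := by
      ext i
      simp only [mem_filter, mem_univ, true_and, mem_insert, Fin.ext_iff]
      omega
    rw [hins, Finset.sum_insert (by simp)]
    ring
  · rw [dif_neg h]
    have : Finset.univ.filter (fun i : Fin n => (i : ℕ) < r + 1)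
        = Finset.univ.filter (fun i : Fin n => (i : ℕ) < r) := by
      ext i
      have := i.isLt
      simp only [mem_filter, mem_univ, true_and]
      omega
    rw [this, add_zero]

lemma stepZ_le (q : Fin n → Bool) (r : ℕ) : stepZ q r ≤ 1 ∧ -1 ≤ stepZ q r := by
  unfold stepZ
  split <;> [skip; omega]
  split <;> omega

lemma height_step_le (q : Fin n → Bool) (r : ℕ) :
    height q (r + 1) ≤ height q r + 1 ∧ height q r ≤ height q (r + 1) + 1 := by
  rw [height_succ]
  have := stepZ_le q r
  omega

lemma ivt_up (h : ℕ → ℤ) (hs : ∀ r, h (r + 1) ≤ h r + 1) (c : ℤ) :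
    ∀ b a, a ≤ b → h a ≤ c → c ≤ h b → ∃ r, a ≤ r ∧ r ≤ b ∧ h r = c := by
  intro b
  induction b with
  | zero =>
    intro a hab h1 h2
    have ha : a = 0 := by omega
    subst ha
    exact ⟨0, le_refl _, le_refl _, by omega⟩
  | succ b ih =>
    intro a hab h1 h2
    rcases Nat.lt_or_ge a (b + 1) with hlt | hge
    · by_cases hc : c ≤ h b
      · obtain ⟨r, hr1, hr2, hr3⟩ := ih a (by omega) h1 hc
        exact ⟨r, hr1, by omega, hr3⟩
      · have := hs b
        exact ⟨b + 1, by omega, le_refl _, by omega⟩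
    · have ha : a = b + 1 := by omega
      subst ha
      exact ⟨b + 1, le_refl _, le_refl _, by omega⟩

lemma ivt_down (h : ℕ → ℤ) (hs : ∀ r, h r ≤ h (r + 1) + 1) (c : ℤ)
    (a b : ℕ) (hab : a ≤ b) (h1 : c ≤ h a) (h2 : h b ≤ c) :
    ∃ r, a ≤ r ∧ r ≤ b ∧ h r = c := by
  obtain ⟨r, hr1, hr2, hr3⟩ := ivt_up (fun r => -h r)
    (fun r => by have := hs r; show -h (r + 1) ≤ -h r + 1; omega) (-c)
    b a hab (show -h a ≤ -c by omega) (show -c ≤ -h b by omega)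
  have : -h r = -c := hr3
  exact ⟨r, hr1, hr2, by omega⟩

def touchSet (c : ℤ) (q : Fin n → Bool) : Finset ℕ :=
  (Finset.range (n + 1)).filter (fun r => height q r = c)

def flipB (c : ℤ) (q : Fin n → Bool) (i : ℕ) : Bool :=
  decide ((Finset.range (i + 1)).filter (fun r => height q r = c)).Nonempty &&
    decide ((Finset.Icc (i + 1) n).filter (fun r => height q r = c)).Nonempty

def sigma (c : ℤ) (q : Fin n → Bool) : Fin n → Bool :=
  fun i => xor (flipB c q (i : ℕ)) (q i)

lemma mem_touchSet {c : ℤ} {q : Fin n → Bool} {r : ℕ} :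
    r ∈ touchSet c q ↔ r ≤ n ∧ height q r = c := by
  simp only [touchSet, mem_filter, mem_range]
  omega

section Tau

variable (c : ℤ) (q : Fin n → Bool) (hT : (touchSet c q).Nonempty)

lemma tau0_le_tau1 : (touchSet c q).min' hT ≤ (touchSet c q).max' hT :=
  Finset.min'_le _ _ ((touchSet c q).max'_mem hT)

lemma height_tau0 : height q ((touchSet c q).min' hT) = c :=
  (mem_touchSet.mp ((touchSet c q).min'_mem hT)).2

lemma height_tau1 : height q ((touchSet c q).max' hT) = c :=
  (mem_touchSet.mp ((touchSet c q).max'_mem hT)).2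

lemma tau1_le : (touchSet c q).max' hT ≤ n :=
  (mem_touchSet.mp ((touchSet c q).max'_mem hT)).1

lemma flipB_iff (i : ℕ) (hi : i ≤ n) :
    flipB c q i = true ↔ (touchSet c q).min' hT ≤ i ∧ i < (touchSet c q).max' hT := by
  unfold flipB
  rw [Bool.and_eq_true, decide_eq_true_iff, decide_eq_true_iff]
  constructor
  · rintro ⟨⟨r1, hr1⟩, ⟨r2, hr2⟩⟩
    rw [mem_filter, mem_range] at hr1
    rw [mem_filter, mem_Icc] at hr2
    constructor
    · have : (touchSet c q).min' hT ≤ r1 :=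
        Finset.min'_le _ _ (mem_touchSet.mpr ⟨by omega, hr1.2⟩)
      omega
    · have : r2 ≤ (touchSet c q).max' hT :=
        Finset.le_max' _ _ (mem_touchSet.mpr ⟨hr2.1.2, hr2.2⟩)
      omega
  · rintro ⟨h1, h2⟩
    constructor
    · exact ⟨(touchSet c q).min' hT, by
        rw [mem_filter, mem_range]
        exact ⟨by omega, height_tau0 c q hT⟩⟩
    · exact ⟨(touchSet c q).max' hT, by
        rw [mem_filter, mem_Icc]
        exact ⟨⟨by omega, tau1_le c q hT⟩, height_tau1 c q hT⟩⟩

lemma stepZ_sigma (r : ℕ) :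
    stepZ (sigma c q) r = if flipB c q r = true then -stepZ q r else stepZ q r := by
  unfold stepZ sigma
  by_cases h : r < n
  · rw [dif_pos h, dif_pos h]
    cases hf : flipB c q r <;> cases hq : q ⟨r, h⟩ <;> simp [hf, hq]
  · rw [dif_neg h, dif_neg h]
    simp

lemma height_sigma (r : ℕ) :
    height (sigma c q) r =
      if (touchSet c q).min' hT ≤ r ∧ r ≤ (touchSet c q).max' hT then
        2 * c - height q r else height q r := by
  set t0 := (touchSet c q).min' hT with ht0
  set t1 := (touchSet c q).max' hT with ht1
  have h01 : t0 ≤ t1 := tau0_le_tau1 c q hT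
  have hh0 : height q t0 = c := height_tau0 c q hT
  have hh1 : height q t1 = c := height_tau1 c q hT
  have h1n : t1 ≤ n := tau1_le c q hT
  induction r with
  | zero =>
    rw [height_zero, height_zero]
    split
    · next hcond =>
      have ht00 : t0 = 0 := by omega
      have hc0 : c = 0 := by rw [← hh0, ht00, height_zero]
      omega
    · rfl
  | succ r ih =>
    rw [height_succ, height_succ, ih, stepZ_sigma c q]
    by_cases hrn : r < n
    · simp only [flipB_iff c q hT r (by omega), ← ht0, ← ht1]
      by_cases hc1 : t0 ≤ r ∧ r < t1
      · rw [if_pos hc1, if_pos (by omega : t0 ≤ r ∧ r ≤ t1),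
          if_pos (by omega : t0 ≤ r + 1 ∧ r + 1 ≤ t1)]
        ring
      · rw [if_neg hc1]
        by_cases hc2 : t0 ≤ r ∧ r ≤ t1
        · have hrt1 : r = t1 := by omega
          rw [if_pos hc2, if_neg (by omega : ¬ (t0 ≤ r + 1 ∧ r + 1 ≤ t1)), hrt1, hh1]
          ring
        · rw [if_neg hc2]
          by_cases hc3 : t0 ≤ r + 1 ∧ r + 1 ≤ t1
          · have hrt0 : r + 1 = t0 := by omega
            rw [if_pos hc3]
            have hc' : height q (r + 1) = c := by rw [hrt0]; exact hh0
            rw [height_succ] at hc'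
            omega
          · rw [if_neg hc3]
    · have hs : stepZ q r = 0 := by unfold stepZ; rw [dif_neg hrn]
      rw [hs]
      rw [if_neg (by omega : ¬ (t0 ≤ r + 1 ∧ r + 1 ≤ t1))]
      by_cases hc2 : t0 ≤ r ∧ r ≤ t1
      · have hr1 : r = t1 := by omega
        rw [if_pos hc2, hr1, hh1]
        split <;> ring
      · rw [if_neg hc2]
        split <;> ring

lemma touch_iff (hT : (touchSet c q).Nonempty) (r : ℕ) :
    height (sigma c q) r = c ↔ height q r = c := by
  rw [height_sigma c q hT]
  split
  · constructor <;> intro h <;> omega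
  · exact Iff.rfl

lemma flipB_sigma (hT : (touchSet c q).Nonempty) (i : ℕ) :
    flipB c (sigma c q) i = flipB c q i := by
  unfold flipB
  congr 1
  · congr 1
    apply propext
    constructor <;> rintro ⟨r, hr⟩ <;> refine ⟨r, ?_⟩ <;>
      rw [mem_filter, mem_range] at * <;>
      exact ⟨hr.1, by
        have := touch_iff c q hT r
        tauto⟩
  · congr 1
    apply propext
    constructor <;> rintro ⟨r, hr⟩ <;> refine ⟨r, ?_⟩ <;>
      rw [mem_filter, mem_Icc] at * <;>
      exact ⟨hr.1, by
        have := touch_iff c q hT r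
        tauto⟩

lemma sigma_sigma (hT : (touchSet c q).Nonempty) : sigma c (sigma c q) = q := by
  funext i
  show xor (flipB c (sigma c q) (i : ℕ)) (sigma c q i) = q i
  rw [flipB_sigma c q hT]
  show xor (flipB c q (i : ℕ)) (xor (flipB c q (i : ℕ)) (q i)) = q i
  cases flipB c q (i : ℕ) <;> cases q i <;> rfl

lemma height_total (q' : Fin n → Bool) : height q' n = 2 * (upSteps q' : ℤ) - n := by
  unfold height upSteps
  have huniv : Finset.univ.filter (fun i : Fin n => (i : ℕ) < n) = Finset.univ := by
    ext i
    simp [i.isLt]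
  rw [huniv]
  have : ∀ i : Fin n, (if q' i then (1 : ℤ) else -1)
      = 2 * (if q' i = true then (1 : ℤ) else 0) - 1 := by
    intro i
    cases q' i <;> simp
  rw [Finset.sum_congr rfl (fun i _ => this i)]
  rw [Finset.sum_sub_distrib, ← Finset.mul_sum, Finset.sum_boole, Finset.sum_const]
  simp [mul_comm]

lemma height_sigma_total (hT : (touchSet c q).Nonempty) :
    height (sigma c q) n = height q n := by
  rw [height_sigma c q hT]
  split
  · next hcond =>
    have h1n : (touchSet c q).max' hT ≤ n := tau1_le c q hT
    have hnm : n = (touchSet c q).max' hT := by omega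
    have h1 := height_tau1 c q hT
    rw [← hnm] at h1
    rw [h1]
    ring
  · rfl

lemma upSteps_sigma (hT : (touchSet c q).Nonempty) : upSteps (sigma c q) = upSteps q := by
  have h1 := height_total (sigma c q)
  have h2 := height_total q
  have h3 := height_sigma_total c q hT
  omega

end Tau

lemma cross_count (h : ℕ → ℤ) (hs1 : ∀ r, h (r + 1) ≤ h r + 1) (hs2 : ∀ r, h r ≤ h (r + 1) + 1)
    (c : ℤ) (N : ℕ) (h0 : h 0 ≤ c) (hN : h N = c) :
    ((Finset.range N).filter (fun i => h i = c ∧ h (i + 1) = c + 1)).card =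
      ((Finset.range N).filter (fun i => h i = c + 1 ∧ h (i + 1) = c)).card := by
  have key : ∀ i, ((if h i = c ∧ h (i + 1) = c + 1 then (1 : ℤ) else 0)
      - (if h i = c + 1 ∧ h (i + 1) = c then (1 : ℤ) else 0))
      = (if c < h (i + 1) then (1 : ℤ) else 0) - (if c < h i then (1 : ℤ) else 0) := by
    intro i
    have := hs1 i
    have := hs2 i
    split_ifs <;> omega
  have tele : ∑ i ∈ Finset.range N,
      ((if c < h (i + 1) then (1 : ℤ) else 0) - (if c < h i then (1 : ℤ) else 0))
      = (if c < h N then (1 : ℤ) else 0) - (if c < h 0 then (1 : ℤ) else 0) :=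
    Finset.sum_range_sub (fun i => if c < h i then (1 : ℤ) else 0) N
  have hz : ∑ i ∈ Finset.range N,
      ((if h i = c ∧ h (i + 1) = c + 1 then (1 : ℤ) else 0)
        - (if h i = c + 1 ∧ h (i + 1) = c then (1 : ℤ) else 0)) = 0 := by
    rw [Finset.sum_congr rfl (fun i _ => key i), tele, hN,
      if_neg (lt_irrefl c), if_neg (not_lt.mpr h0)]
    ring
  rw [Finset.sum_sub_distrib] at hz
  have hcast : (((Finset.range N).filter (fun i => h i = c ∧ h (i + 1) = c + 1)).card : ℤ)
      = (((Finset.range N).filter (fun i => h i = c + 1 ∧ h (i + 1) = c)).card : ℤ) := by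
    rw [← Finset.sum_boole, ← Finset.sum_boole]
    omega
  exact_mod_cast hcast

lemma card_shift (N M : ℕ) (P : ℕ → Prop) [DecidablePred P] :
    ((Finset.Icc 1 M).filter (fun r => P r ∧ r ≤ N)).card =
      ((Finset.range (min N M)).filter (fun i => P (i + 1))).card := by
  have himg : (Finset.Icc 1 M).filter (fun r => P r ∧ r ≤ N)
      = ((Finset.range (min N M)).filter (fun i => P (i + 1))).image (· + 1) := by
    ext r
    simp only [mem_filter, mem_Icc, Finset.mem_image, Finset.mem_range]
    constructor
    · rintro ⟨⟨hr1, hr2⟩, hP, hrN⟩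
      refine ⟨r - 1, ⟨by omega, ?_⟩, by omega⟩
      rwa [Nat.sub_add_cancel hr1]
    · rintro ⟨i, ⟨hi, hPi⟩, rfl⟩
      exact ⟨⟨by omega, by omega⟩, hPi, by omega⟩
  rw [himg, Finset.card_image_of_injective _ (add_left_injective 1)]

lemma visits_sigma (c : ℤ) (q : Fin n → Bool) (hc0 : 0 ≤ c) (hcn : c ≤ height q n) :
    visitsFromAbove (sigma c q) (c - 1) = visitsFromAbove q c := by
  have hT : (touchSet c q).Nonempty := by
    obtain ⟨r, hr1, hr2, hr3⟩ := ivt_up (height q) (fun r => (height_step_le q r).1) c n 0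
      (by omega) (by rw [height_zero]; omega) hcn
    exact ⟨r, mem_touchSet.mpr ⟨hr2, hr3⟩⟩
  have key := height_sigma c q hT
  set t0 := (touchSet c q).min' hT with ht0
  set t1 := (touchSet c q).max' hT with ht1
  have ht1n : t1 ≤ n := tau1_le c q hT
  have hht1 : height q t1 = c := height_tau1 c q hT
  have hmem : ∀ x : ℕ, x ≤ n → height q x = c → t0 ≤ x ∧ x ≤ t1 := by
    intro x hx hhx
    exact ⟨Finset.min'_le _ _ (mem_touchSet.mpr ⟨hx, hhx⟩),
      Finset.le_max' _ _ (mem_touchSet.mpr ⟨hx, hhx⟩)⟩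
  have hc1 : c - 1 + 1 = c := by ring
  unfold visitsFromAbove
  rw [hc1]
  have e1 : (Finset.Icc 1 n).filter
        (fun r => height (sigma c q) r = c - 1 ∧ height (sigma c q) (r - 1) = c)
      = (Finset.Icc 1 n).filter
        (fun r => (height q (r - 1) = c ∧ height q r = c + 1) ∧ r ≤ t1) := by
    ext r
    simp only [mem_filter, mem_Icc]
    constructor
    · rintro ⟨⟨hr1, hr2⟩, hA, hB⟩
      have hA' : height q (r - 1) = c := (touch_iff c q hT (r - 1)).mp hB
      have h1 := hmem (r - 1) (by omega) hA'
      by_cases hrt : r ≤ t1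
      · have hAr := key r
        rw [if_pos (by omega : t0 ≤ r ∧ r ≤ t1)] at hAr
        refine ⟨⟨hr1, hr2⟩, ⟨hA', by omega⟩, hrt⟩
      · exfalso
        have hAr := key r
        rw [if_neg (by omega : ¬ (t0 ≤ r ∧ r ≤ t1))] at hAr
        have hqr : height q r = c - 1 := by omega
        obtain ⟨r', hr1', hr2', hr3'⟩ := ivt_up (height q)
          (fun x => (height_step_le q x).1) c n r hr2 (by omega) hcn
        have := (hmem r' hr2' hr3').2
        omega
    · rintro ⟨⟨hr1, hr2⟩, ⟨hA, hB⟩, hrt⟩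
      have h1 := hmem (r - 1) (by omega) hA
      have hkr1 := key (r - 1)
      rw [if_pos (by omega : t0 ≤ r - 1 ∧ r - 1 ≤ t1)] at hkr1
      have hkr := key r
      rw [if_pos (by omega : t0 ≤ r ∧ r ≤ t1)] at hkr
      exact ⟨⟨hr1, hr2⟩, by omega, by omega⟩
  have e2 : (Finset.Icc 1 n).filter
        (fun r => height q r = c ∧ height q (r - 1) = c + 1)
      = (Finset.Icc 1 n).filter
        (fun r => (height q (r - 1) = c + 1 ∧ height q r = c) ∧ r ≤ t1) := by
    ext r
    simp only [mem_filter, mem_Icc]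
    constructor
    · rintro ⟨⟨hr1, hr2⟩, hA, hB⟩
      exact ⟨⟨hr1, hr2⟩, ⟨hB, hA⟩, (hmem r hr2 hA).2⟩
    · rintro ⟨⟨hr1, hr2⟩, ⟨hA, hB⟩, hrt⟩
      exact ⟨⟨hr1, hr2⟩, hB, hA⟩
  rw [e1, e2, card_shift t1 n, card_shift t1 n, Nat.min_eq_left ht1n]
  have f1 : (Finset.range t1).filter
        (fun i => height q (i + 1 - 1) = c ∧ height q (i + 1) = c + 1)
      = (Finset.range t1).filter (fun i => height q i = c ∧ height q (i + 1) = c + 1) := by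
    ext i
    simp only [mem_filter, Nat.add_sub_cancel]
  have f2 : (Finset.range t1).filter
        (fun i => height q (i + 1 - 1) = c + 1 ∧ height q (i + 1) = c)
      = (Finset.range t1).filter (fun i => height q i = c + 1 ∧ height q (i + 1) = c) := by
    ext i
    simp only [mem_filter, Nat.add_sub_cancel]
  rw [f1, f2]
  exact cross_count (height q) (fun r => (height_step_le q r).1)
    (fun r => (height_step_le q r).2) c t1 (by rw [height_zero]; omega) hht1

lemma card_step (k s p : ℕ) (c : ℤ) (hc0 : 0 ≤ c) (hc : c ≤ (k : ℤ) - s) :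
    (Finset.univ.filter (fun q : Fin (k + s) → Bool =>
        upSteps q = k ∧ visitsFromAbove q (c - 1) = p)).card =
      (Finset.univ.filter (fun q : Fin (k + s) → Bool =>
        upSteps q = k ∧ visitsFromAbove q c = p)).card := by
  have hht : ∀ q : Fin (k + s) → Bool, upSteps q = k → height q (k + s) = (k : ℤ) - s := by
    intro q hq
    rw [height_total, hq]
    push_cast
    ring
  have hTT : ∀ q : Fin (k + s) → Bool, upSteps q = k → (touchSet c q).Nonempty := by
    intro q hq
    obtain ⟨r, _, hr2, hr3⟩ := ivt_up (height q) (fun r => (height_step_le q r).1) c (k + s) 0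
      (Nat.zero_le _) (by rw [height_zero]; omega) (by rw [hht q hq]; omega)
    exact ⟨r, mem_touchSet.mpr ⟨hr2, hr3⟩⟩
  symm
  apply Finset.card_nbij' (sigma c) (sigma c)
  · intro q hq
    rw [Finset.mem_coe, Finset.mem_filter] at *
    obtain ⟨-, hu, hv⟩ := hq
    have hT := hTT q hu
    refine ⟨Finset.mem_univ _, ?_, ?_⟩
    · rw [upSteps_sigma c q hT, hu]
    · rw [visits_sigma c q hc0 (by rw [hht q hu]; omega), hv]
  · intro q hq
    rw [Finset.mem_coe, Finset.mem_filter] at *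
    obtain ⟨-, hu, hv⟩ := hq
    have hT := hTT q hu
    have hu' : upSteps (sigma c q) = k := by rw [upSteps_sigma c q hT, hu]
    have hvs := visits_sigma c (sigma c q) hc0 (by rw [hht _ hu']; omega)
    rw [sigma_sigma c q hT] at hvs
    refine ⟨Finset.mem_univ _, hu', ?_⟩
    rw [← hvs, hv]
  · intro q hq
    rw [Finset.mem_coe, Finset.mem_filter] at hq
    exact sigma_sigma c q (hTT q hq.2.1)
  · intro q hq
    rw [Finset.mem_coe, Finset.mem_filter] at hq
    exact sigma_sigma c q (hTT q hq.2.1)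

end Stmt3

/-- Let `k ≥ s` and `p ≥ 0`. For `−1 ≤ m ≤ k − s`, the number of lattice
paths with `k` upsteps and `s` downsteps that visit height `m` from above exactly `p`
times is independent of `m` in that range. -/
theorem stmt_3 (k s p : ℕ) (hks : s ≤ k) (m₁ m₂ : ℤ)
    (hm₁ : -1 ≤ m₁) (hm₁' : m₁ ≤ (k : ℤ) - s)
    (hm₂ : -1 ≤ m₂) (hm₂' : m₂ ≤ (k : ℤ) - s) :
    (Finset.univ.filter (fun q : Fin (k + s) → Bool =>
        upSteps q = k ∧ visitsFromAbove q m₁ = p)).card =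
      (Finset.univ.filter (fun q : Fin (k + s) → Bool =>
        upSteps q = k ∧ visitsFromAbove q m₂ = p)).card := by
  set F : ℤ → ℕ := fun m => (Finset.univ.filter (fun q : Fin (k + s) → Bool =>
      upSteps q = k ∧ visitsFromAbove q m = p)).card with hF
  show F m₁ = F m₂
  have key : ∀ j : ℕ, (j : ℤ) - 1 ≤ (k : ℤ) - s → F ((j : ℤ) - 1) = F (-1) := by
    intro j
    induction j with
    | zero => intro _; norm_num
    | succ j ih =>
      intro hj
      have h1 : ((j : ℤ) + 1) - 1 = (j : ℤ) := by ring
      have h2 : ((j + 1 : ℕ) : ℤ) = (j : ℤ) + 1 := by push_cast; ring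
      rw [h2, h1]
      have hstep := Stmt3.card_step k s p (j : ℤ) (by positivity)
        (by push_cast at hj ⊢; omega)
      exact (hstep.symm).trans (ih (by push_cast at hj ⊢; omega))
  have hm : ∀ m : ℤ, -1 ≤ m → m ≤ (k : ℤ) - s → F m = F (-1) := by
    intro m h1 h2
    have hj : ((m + 1).toNat : ℤ) = m + 1 := Int.toNat_of_nonneg (by omega)
    have := key (m + 1).toNat (by omega)
    rw [hj] at this
    rw [show m + 1 - 1 = m by ring] at this
    exact this
  rw [hm m₁ hm₁ hm₁', hm m₂ hm₂ hm₂']
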